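/- arXiv:1306.1017 — 4 statements merged into one kernel-verified Lean document; each statement's English description precedes it below -/
import Mathlib

section
/- Let c₁ ≠ c₂ be points of the Euclidean plane with d = dist(c₁, c₂), let r₁, r₂ > 0 with r²(d) ≥ 0, let u = (c₂ − c₁)/d, let p̂ be a unit vector with ⟪p̂, u⟫ = 0, and set c = c₁ + (d₁(d)/d)·(c₂ − c₁). Then the intersection of the circle of center c₁ radius r₁ with the circle of center c₂ radius r₂ is exactly the point pair {c + √(r²(d))·p̂, c − √(r²(d))·p̂}; in particular the two intersection points have midpoint c and distance 2√(r²(d)). -/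
noncomputable section

open scoped RealInnerProductSpace

/-- The squared half-chord of the meet of two circles with radii `r₁, r₂` and center
distance `d`. -/
def rSq (r₁ r₂ d : ℝ) : ℝ :=
  d ^ 2 * (r₁ ^ 2 * r₂ ^ 2 / d ^ 4 - (1 / 4) * (1 - r₁ ^ 2 / d ^ 2 - r₂ ^ 2 / d ^ 2) ^ 2)

/-- The signed distance from the first center to the chord midpoint. -/
def dOne (r₁ r₂ d : ℝ) : ℝ := (1 / 2) * (d + (r₁ ^ 2 - r₂ ^ 2) / d)

set_option maxHeartbeats 1000000 in
/-- When `r²(d) ≥ 0`, the meet of two circles is exactly the point pair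
`{c + √(r²(d))·phat, c − √(r²(d))·phat}`; in particular the two intersection points have
midpoint `c` and distance `2√(r²(d))`. -/
theorem circles_meet_point_pair
    (c₁ c₂ : EuclideanSpace ℝ (Fin 2)) (hc : c₁ ≠ c₂)
    (d r₁ r₂ : ℝ) (hd : d = dist c₁ c₂) (hr₁ : 0 < r₁) (hr₂ : 0 < r₂)
    (hrsq : 0 ≤ rSq r₁ r₂ d)
    (u phat : EuclideanSpace ℝ (Fin 2)) (hu : u = (1 / d) • (c₂ - c₁))
    (hphat : ‖phat‖ = 1) (hperp : ⟪phat, u⟫ = 0)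
    (c : EuclideanSpace ℝ (Fin 2)) (hcdef : c = c₁ + (dOne r₁ r₂ d / d) • (c₂ - c₁)) :
    Metric.sphere c₁ r₁ ∩ Metric.sphere c₂ r₂ =
        {c + Real.sqrt (rSq r₁ r₂ d) • phat, c - Real.sqrt (rSq r₁ r₂ d) • phat} ∧
      midpoint ℝ (c + Real.sqrt (rSq r₁ r₂ d) • phat) (c - Real.sqrt (rSq r₁ r₂ d) • phat) = c ∧
      dist (c + Real.sqrt (rSq r₁ r₂ d) • phat) (c - Real.sqrt (rSq r₁ r₂ d) • phat) =
        2 * Real.sqrt (rSq r₁ r₂ d) := by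
  have hd0 : 0 < d := hd ▸ dist_pos.2 hc
  have hdne : d ≠ 0 := ne_of_gt hd0
  have hnormc : ‖c₂ - c₁‖ = d := by rw [hd, dist_comm, dist_eq_norm]
  have hc21 : c₂ - c₁ = d • u := by
    rw [hu, smul_smul]; field_simp; rw [one_smul]
  have hun : ‖u‖ = 1 := by
    rw [hu, norm_smul, hnormc]
    simp [abs_of_pos hd0]
    field_simp
  have hperp' : ⟪u, phat⟫ = 0 := by rw [real_inner_comm]; exact hperp
  have huu : ⟪u, u⟫ = 1 := by
    rw [real_inner_self_eq_norm_sq, hun]; norm_num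
  have hpp : ⟪phat, phat⟫ = 1 := by
    rw [real_inner_self_eq_norm_sq, hphat]; norm_num
  -- orthonormal basis
  have hon : Orthonormal ℝ ![phat, u] := by
    rw [orthonormal_iff_ite]
    intro i j
    fin_cases i <;> fin_cases j <;>
      simp [hpp, huu, hperp, hperp', hphat, hun]
  have hcard : Fintype.card (Fin 2) = Module.finrank ℝ (EuclideanSpace ℝ (Fin 2)) := by simp
  let b := basisOfOrthonormalOfCardEqFinrank hon hcard
  have hb : ⇑b = ![phat, u] := coe_basisOfOrthonormalOfCardEqFinrank hon hcard
  let ob := b.toOrthonormalBasis (by rwa [hb])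
  have hob : ⇑ob = ![phat, u] := by
    rw [show ⇑ob = ⇑b from Module.Basis.coe_toOrthonormalBasis _ _, hb]
  have hdecomp : ∀ v : EuclideanSpace ℝ (Fin 2), ⟪phat, v⟫ • phat + ⟪u, v⟫ • u = v := by
    intro v
    have h := ob.sum_repr v
    rw [Fin.sum_univ_two] at h
    simp only [ob.repr_apply_apply, hob] at h
    simpa using h
  have hnorm : ∀ v : EuclideanSpace ℝ (Fin 2), ‖v‖ ^ 2 = ⟪u, v⟫ ^ 2 + ⟪phat, v⟫ ^ 2 := by
    intro v
    conv_lhs => rw [← hdecomp v]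
    rw [← real_inner_self_eq_norm_sq]
    simp only [inner_add_left, inner_add_right, real_inner_smul_left, real_inner_smul_right,
      hpp, huu, hperp, hperp']
    ring
  have hnsq : ∀ e t : ℝ, ‖e • u + t • phat‖ ^ 2 = e ^ 2 + t ^ 2 := by
    intro e t
    rw [hnorm]
    simp only [inner_add_right, real_inner_smul_right, hpp, huu, hperp, hperp']
    ring
  -- key algebraic identities
  have hA : dOne r₁ r₂ d ^ 2 + rSq r₁ r₂ d = r₁ ^ 2 := by
    unfold dOne rSq; field_simp; ring
  have hB : (dOne r₁ r₂ d - d) ^ 2 + rSq r₁ r₂ d = r₂ ^ 2 := by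
    unfold dOne rSq; field_simp; ring
  have hcc1 : c - c₁ = dOne r₁ r₂ d • u := by
    rw [hcdef, hc21, smul_smul]
    field_simp
    abel
  have hcc2 : c - c₂ = (dOne r₁ r₂ d - d) • u := by
    have : c - c₂ = (c - c₁) - (c₂ - c₁) := by abel
    rw [this, hcc1, hc21, sub_smul]
  have hts : Real.sqrt (rSq r₁ r₂ d) ^ 2 = rSq r₁ r₂ d := Real.sq_sqrt hrsq
  have hmem : ∀ (t : ℝ) (z : EuclideanSpace ℝ (Fin 2)) (e r : ℝ), 0 ≤ r → c - z = e • u →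
      e ^ 2 + t ^ 2 = r ^ 2 → dist (c + t • phat) z = r := by
    intro t z e r hr hz hsum
    have h1 : c + t • phat - z = e • u + t • phat := by
      have : c + t • phat - z = (c - z) + t • phat := by abel
      rw [this, hz]
    rw [dist_eq_norm, h1]
    have h2 : ‖e • u + t • phat‖ ^ 2 = r ^ 2 := by rw [hnsq]; exact hsum
    exact (sq_eq_sq₀ (norm_nonneg _) hr).1 h2
  have hsub : ∀ t : ℝ, c - t • phat = c + (-t) • phat := by
    intro t; rw [neg_smul, sub_eq_add_neg]
  refine ⟨?_, by simp, ?_⟩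
  · ext x
    simp only [Set.mem_inter_iff, Metric.mem_sphere, Set.mem_insert_iff, Set.mem_singleton_iff]
    constructor
    · rintro ⟨h1, h2⟩
      set p := ⟪u, x - c₁⟫ with hp
      set q := ⟪phat, x - c₁⟫ with hq
      have e1 : p ^ 2 + q ^ 2 = r₁ ^ 2 := by
        rw [← hnorm, ← dist_eq_norm, h1]
      have hx2 : x - c₂ = (x - c₁) - d • u := by
        rw [← hc21]; abel
      have e2 : (p - d) ^ 2 + q ^ 2 = r₂ ^ 2 := by
        have hpu : ⟪u, x - c₂⟫ = p - d := by
          rw [hx2, inner_sub_right, real_inner_smul_right, huu, hp]; ring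
        have hpq : ⟪phat, x - c₂⟫ = q := by
          rw [hx2, inner_sub_right, real_inner_smul_right, hperp, hq]; ring
        have := hnorm (x - c₂)
        rw [hpu, hpq, ← dist_eq_norm, h2] at this
        linarith
      have hpval : p = dOne r₁ r₂ d := by
        have h3 : 2 * d * p = d ^ 2 + r₁ ^ 2 - r₂ ^ 2 := by linear_combination e1 - e2
        unfold dOne; field_simp; linear_combination h3
      have hq2 : q ^ 2 = rSq r₁ r₂ d := by nlinarith [e1, hA]
      have habs : |q| = Real.sqrt (rSq r₁ r₂ d) := by
        rw [← Real.sqrt_sq_eq_abs, hq2]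
      have hx : x = c₁ + q • phat + p • u := by
        have := hdecomp (x - c₁)
        rw [← hp, ← hq] at this
        have h' : c₁ + (q • phat + p • u) = c₁ + (x - c₁) := by rw [this]
        simpa [add_assoc] using h'.symm
      have hceq : c = c₁ + dOne r₁ r₂ d • u := by
        have := hcc1; rw [sub_eq_iff_eq_add] at this
        rw [this]; abel
      rcases (abs_eq (Real.sqrt_nonneg _)).1 habs with hqv | hqv
      · left; rw [hx, hpval, hqv, hceq]; abel
      · right; rw [hx, hpval, hqv, hceq, neg_smul, sub_eq_add_neg]; abel
    · rintro (rfl | rfl)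
      · exact ⟨hmem _ _ _ _ hr₁.le hcc1 (by rw [hts]; exact hA),
          hmem _ _ _ _ hr₂.le hcc2 (by rw [hts]; exact hB)⟩
      · rw [hsub]
        exact ⟨hmem _ _ _ _ hr₁.le hcc1 (by rw [neg_sq, hts]; exact hA),
          hmem _ _ _ _ hr₂.le hcc2 (by rw [neg_sq, hts]; exact hB)⟩
  · rw [dist_eq_norm]
    have h1 : c + Real.sqrt (rSq r₁ r₂ d) • phat - (c - Real.sqrt (rSq r₁ r₂ d) • phat)
        = (2 * Real.sqrt (rSq r₁ r₂ d)) • phat := by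
      rw [two_mul, add_smul]; abel
    rw [h1, norm_smul, hphat]
    simp [abs_of_nonneg (by positivity : (0:ℝ) ≤ 2 * Real.sqrt (rSq r₁ r₂ d))]
end
end

section
/- Let c₁ ≠ c₂ be points of the Euclidean plane with d = dist(c₁, c₂), let r₁, r₂ > 0 with r²(d) < 0, let u = (c₂ − c₁)/d, let p̂ be a unit vector with ⟪p̂, u⟫ = 0, and set c = c₁ + d₁(d)·u. Then the virtual intersection points q± = c ± √(−r²(d))·p̂ of the two circles lie on the rectangular hyperbola with center c₁, transverse axis along u and semitransverse axis r₁: ⟪q± − c₁, u⟫² − ⟪q± − c₁, p̂⟫² = r₁². -/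
noncomputable section

open scoped RealInnerProductSpace

/-- When `r²(d) < 0`, the virtual intersection points `q± = c ± √(−r²(d))·phat` of two
circles lie on the rectangular hyperbola with center `c₁`, transverse axis along
`u = (c₂ − c₁)/d` and semitransverse axis `r₁`:
`⟪q± − c₁, u⟫² − ⟪q± − c₁, phat⟫² = r₁²`. -/
theorem circles_virtual_meet_on_hyperbola
    (c₁ c₂ : EuclideanSpace ℝ (Fin 2)) (hc : c₁ ≠ c₂)
    (d r₁ r₂ : ℝ) (hd : d = dist c₁ c₂) (hr₁ : 0 < r₁) (hr₂ : 0 < r₂)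
    (hrsq : rSq r₁ r₂ d < 0)
    (u phat : EuclideanSpace ℝ (Fin 2)) (hu : u = (1 / d) • (c₂ - c₁))
    (hphat : ‖phat‖ = 1) (hperp : ⟪phat, u⟫ = 0)
    (c : EuclideanSpace ℝ (Fin 2)) (hcdef : c = c₁ + dOne r₁ r₂ d • u)
    (qplus qminus : EuclideanSpace ℝ (Fin 2))
    (hqplus : qplus = c + Real.sqrt (-(rSq r₁ r₂ d)) • phat)
    (hqminus : qminus = c - Real.sqrt (-(rSq r₁ r₂ d)) • phat) :
    ⟪qplus - c₁, u⟫ ^ 2 - ⟪qplus - c₁, phat⟫ ^ 2 = r₁ ^ 2 ∧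
      ⟪qminus - c₁, u⟫ ^ 2 - ⟪qminus - c₁, phat⟫ ^ 2 = r₁ ^ 2 := by

  have hdpos : 0 < d := by rw [hd]; exact dist_pos.mpr hc
  have hdne : d ≠ 0 := ne_of_gt hdpos
  have hnu : ‖u‖ = 1 := by
    rw [hu, norm_smul, ← dist_eq_norm', ← hd]
    rw [Real.norm_eq_abs, abs_of_pos (by positivity : (0:ℝ) < 1/d)]
    field_simp
  have huu : ⟪u, u⟫ = 1 := by
    rw [real_inner_self_eq_norm_sq, hnu]; norm_num
  have hup : ⟪u, phat⟫ = 0 := by rw [real_inner_comm]; exact hperp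
  have hpp : ⟪phat, phat⟫ = 1 := by
    rw [real_inner_self_eq_norm_sq, hphat]; norm_num
  set s := Real.sqrt (-(rSq r₁ r₂ d)) with hs
  have hs2 : s ^ 2 = -(rSq r₁ r₂ d) := Real.sq_sqrt (by linarith)
  have halg : dOne r₁ r₂ d ^ 2 - s ^ 2 = r₁ ^ 2 := by
    rw [hs2, rSq, dOne]; field_simp; ring
  have hqp : qplus - c₁ = dOne r₁ r₂ d • u + s • phat := by
    rw [hqplus, hcdef]; abel
  have hqm : qminus - c₁ = dOne r₁ r₂ d • u - s • phat := by
    rw [hqminus, hcdef]; abel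
  constructor
  · rw [hqp]
    simp [inner_add_left, inner_smul_left, huu, hup, hperp, hpp, real_inner_comm phat u, hnu, hphat]
    linarith
  · rw [hqm]
    simp [inner_sub_left, inner_smul_left, huu, hup, hperp, hpp, real_inner_comm phat u, hnu, hphat]
    linarith
end
end

section
/- Fix r₁, r₂ > 0. As the center distance d tends to infinity, the virtual point pair approaches the asymptotes of its locus hyperbola at angle π/4 to the center line: the ratio √(−r²(d)) / d₁(d) tends to 1 as d → ∞ (note r²(d) < 0 and d₁(d) > 0 for all d > r₁ + r₂). -/
noncomputable section

open Filter

/-- As the center distance `d` tends to infinity, the virtual point pair approaches the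
asymptotes of its locus hyperbola at angle `π/4` to the center line:
`√(−r²(d)) / d₁(d) → 1` (note `r²(d) < 0` and `d₁(d) > 0` for all `d > r₁ + r₂`). -/
theorem virtual_meet_asymptote (r₁ r₂ : ℝ) (hr₁ : 0 < r₁) (hr₂ : 0 < r₂) :
    (∀ d : ℝ, r₁ + r₂ < d → rSq r₁ r₂ d < 0 ∧ 0 < dOne r₁ r₂ d) ∧
      Tendsto (fun d : ℝ => Real.sqrt (-(rSq r₁ r₂ d)) / dOne r₁ r₂ d) atTop (nhds 1) := by
  set a := (r₁ + r₂) ^ 2 with ha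
  set b := (r₁ - r₂) ^ 2 with hb
  set c := r₁ ^ 2 - r₂ ^ 2 with hc
  have key : ∀ d : ℝ, 0 < d →
      -(rSq r₁ r₂ d) = (d / 2) ^ 2 * ((1 - a / d ^ 2) * (1 - b / d ^ 2)) := by
    intro d hd
    have hd' : d ≠ 0 := ne_of_gt hd
    rw [rSq, ha, hb]
    field_simp
    ring
  have keyd : ∀ d : ℝ, 0 < d → dOne r₁ r₂ d = (d / 2) * (1 + c / d ^ 2) := by
    intro d hd
    have hd' : d ≠ 0 := ne_of_gt hd
    rw [dOne, hc]
    field_simp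
  constructor
  · intro d hd
    have hd0 : 0 < d := lt_trans (by positivity) hd
    have h1 : 0 < 1 - a / d ^ 2 := by
      rw [ha, sub_pos, div_lt_one (by positivity)]
      nlinarith
    have h2 : 0 < 1 - b / d ^ 2 := by
      rw [hb, sub_pos, div_lt_one (by positivity)]
      nlinarith
    constructor
    · have := key d hd0
      nlinarith [sq_nonneg (d / 2), mul_pos h1 h2, pow_pos (half_pos hd0) 2]
    · rw [keyd d hd0]
      have : 0 < 1 + c / d ^ 2 := by
        rw [hc]
        have : -(1:ℝ) < (r₁ ^ 2 - r₂ ^ 2) / d ^ 2 := by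
          rw [neg_lt, ← neg_div, div_lt_one (by positivity : (0:ℝ) < d ^ 2)]
          nlinarith
        linarith
      positivity
  · have hsq : Tendsto (fun d : ℝ => d ^ 2) atTop atTop :=
      tendsto_pow_atTop two_ne_zero
    have hA : Tendsto (fun d : ℝ => a / d ^ 2) atTop (nhds 0) :=
      tendsto_const_nhds.div_atTop hsq
    have hB : Tendsto (fun d : ℝ => b / d ^ 2) atTop (nhds 0) :=
      tendsto_const_nhds.div_atTop hsq
    have hC : Tendsto (fun d : ℝ => c / d ^ 2) atTop (nhds 0) :=
      tendsto_const_nhds.div_atTop hsq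
    have hnum : Tendsto (fun d : ℝ =>
        Real.sqrt ((1 - a / d ^ 2) * (1 - b / d ^ 2))) atTop (nhds 1) := by
      have c1 : Tendsto (fun _ : ℝ => (1:ℝ)) atTop (nhds 1) := tendsto_const_nhds
      have h1 : Tendsto (fun d : ℝ => (1 - a / d ^ 2) * (1 - b / d ^ 2)) atTop (nhds 1) := by
        have := (c1.sub hA).mul (c1.sub hB)
        simpa using this
      have := h1.sqrt
      simpa using this
    have hden : Tendsto (fun d : ℝ => 1 + c / d ^ 2) atTop (nhds 1) := by
      have c1 : Tendsto (fun _ : ℝ => (1:ℝ)) atTop (nhds 1) := tendsto_const_nhds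
      have := c1.add hC
      simpa using this
    have hlim : Tendsto (fun d : ℝ =>
        Real.sqrt ((1 - a / d ^ 2) * (1 - b / d ^ 2)) / (1 + c / d ^ 2)) atTop (nhds 1) := by
      have := hnum.div hden one_ne_zero
      rw [div_one] at this
      exact this
    refine hlim.congr' ?_
    filter_upwards [eventually_gt_atTop (r₁ + r₂), eventually_gt_atTop 0] with d hd hd0
    have h1 : 0 < 1 - a / d ^ 2 := by
      rw [ha, sub_pos, div_lt_one (by positivity)]
      nlinarith
    have h2 : 0 < 1 - b / d ^ 2 := by
      rw [hb, sub_pos, div_lt_one (by positivity)]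
      nlinarith
    rw [key d hd0, keyd d hd0, Real.sqrt_mul (sq_nonneg _),
      Real.sqrt_sq (le_of_lt (half_pos hd0)),
      mul_div_mul_left _ _ (ne_of_gt (half_pos hd0))]
end
end

section
/- Let c₁ ≠ c₂ be points of Euclidean 3-space with d = dist(c₁, c₂), let r₁, r₂ > 0, and set c = c₁ + (d₁(d)/d)·(c₂ − c₁) with d₁(d) = ½(d + (r₁² − r₂²)/d). If r²(d) ≥ 0, then the intersection of the sphere of center c₁ radius r₁ with the sphere of center c₂ radius r₂ is exactly the circle {p : dist(p, c) = √(r²(d)) and ⟪p − c, c₂ − c₁⟫ = 0}, i.e. the circle of radius √(r²(d)) centered at c in the plane through c perpendicular to the center line; if r²(d) < 0, the intersection is empty. -/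
noncomputable section

open scoped RealInnerProductSpace

/-- Algebraic core: the two sphere equations in terms of `x = ‖p − c‖²` and
`y = ⟪p − c, c₂ − c₁⟫` are equivalent to `x = r²(d)` and `y = 0`. -/
lemma alg_iff (d r₁ r₂ x y : ℝ) (hd : d ≠ 0) :
    (x + 2 * (dOne r₁ r₂ d / d) * y + (dOne r₁ r₂ d / d) ^ 2 * d ^ 2 = r₁ ^ 2 ∧
     x + 2 * (dOne r₁ r₂ d / d - 1) * y + (dOne r₁ r₂ d / d - 1) ^ 2 * d ^ 2 = r₂ ^ 2)
    ↔ (x = rSq r₁ r₂ d ∧ y = 0) := by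
  unfold rSq dOne
  constructor
  · rintro ⟨h1, h2⟩
    field_simp at h1 h2 ⊢
    have h16 : (16:ℝ) * d ^ 6 * y = 0 := by linear_combination 2 * d ^ 4 * (h1 - h2)
    have hy : y = 0 := by
      have hne : (16:ℝ) * d ^ 6 ≠ 0 := by positivity
      exact (mul_eq_zero.mp h16).resolve_left hne
    subst hy
    exact ⟨by linear_combination h1, rfl⟩
  · rintro ⟨hx, hy⟩
    subst hx; subst hy
    constructor <;> (field_simp; ring)

/-- Full meet of two spheres: if `r²(d) ≥ 0` the intersection is the circle of radius
`√(r²(d))` centered at `c = c₁ + (d₁(d)/d)·(c₂ − c₁)` in the plane through `c`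
perpendicular to the center line; if `r²(d) < 0` the intersection is empty. -/
theorem spheres_meet
    (c₁ c₂ : EuclideanSpace ℝ (Fin 3)) (hc : c₁ ≠ c₂)
    (d r₁ r₂ : ℝ) (hd : d = dist c₁ c₂) (hr₁ : 0 < r₁) (hr₂ : 0 < r₂)
    (c : EuclideanSpace ℝ (Fin 3)) (hcdef : c = c₁ + (dOne r₁ r₂ d / d) • (c₂ - c₁)) :
    (0 ≤ rSq r₁ r₂ d → Metric.sphere c₁ r₁ ∩ Metric.sphere c₂ r₂ =
        {p | dist p c = Real.sqrt (rSq r₁ r₂ d) ∧ ⟪p - c, c₂ - c₁⟫ = 0}) ∧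
      (rSq r₁ r₂ d < 0 → Metric.sphere c₁ r₁ ∩ Metric.sphere c₂ r₂ = ∅) := by
  have hd0 : 0 < d := by rw [hd]; exact dist_pos.mpr hc
  have hdne : d ≠ 0 := hd0.ne'
  set t : ℝ := dOne r₁ r₂ d / d with ht
  have hun : ‖c₂ - c₁‖ = d := by rw [hd, dist_eq_norm, norm_sub_rev]
  have key : ∀ p : EuclideanSpace ℝ (Fin 3),
      p ∈ Metric.sphere c₁ r₁ ∩ Metric.sphere c₂ r₂ ↔
      (‖p - c‖ ^ 2 = rSq r₁ r₂ d ∧ ⟪p - c, c₂ - c₁⟫ = 0) := by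
    intro p
    have hp1 : p - c₁ = (p - c) + t • (c₂ - c₁) := by rw [hcdef]; module
    have hp2 : p - c₂ = (p - c) + (t - 1) • (c₂ - c₁) := by rw [hcdef]; module
    have e1 : ‖p - c₁‖ ^ 2 =
        ‖p - c‖ ^ 2 + 2 * t * ⟪p - c, c₂ - c₁⟫ + t ^ 2 * d ^ 2 := by
      rw [hp1, norm_add_sq_real, real_inner_smul_right, norm_smul,
        Real.norm_eq_abs, mul_pow, sq_abs, hun]; ring
    have e2 : ‖p - c₂‖ ^ 2 =
        ‖p - c‖ ^ 2 + 2 * (t - 1) * ⟪p - c, c₂ - c₁⟫ + (t - 1) ^ 2 * d ^ 2 := by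
      rw [hp2, norm_add_sq_real, real_inner_smul_right, norm_smul,
        Real.norm_eq_abs, mul_pow, sq_abs, hun]; ring
    have m1 : p ∈ Metric.sphere c₁ r₁ ↔ ‖p - c₁‖ ^ 2 = r₁ ^ 2 := by
      rw [Metric.mem_sphere, dist_eq_norm]
      constructor
      · intro h; rw [h]
      · intro h; nlinarith [norm_nonneg (p - c₁)]
    have m2 : p ∈ Metric.sphere c₂ r₂ ↔ ‖p - c₂‖ ^ 2 = r₂ ^ 2 := by
      rw [Metric.mem_sphere, dist_eq_norm]
      constructor
      · intro h; rw [h]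
      · intro h; nlinarith [norm_nonneg (p - c₂)]
    rw [Set.mem_inter_iff, m1, m2, e1, e2,
      ← alg_iff d r₁ r₂ (‖p - c‖ ^ 2) ⟪p - c, c₂ - c₁⟫ hdne]
  constructor
  · intro hpos
    ext p
    rw [Set.mem_setOf_eq, key p]
    constructor
    · rintro ⟨h1, h2⟩
      refine ⟨?_, h2⟩
      rw [← h1, dist_eq_norm, Real.sqrt_sq (norm_nonneg _)]
    · rintro ⟨h1, h2⟩
      refine ⟨?_, h2⟩
      rw [dist_eq_norm] at h1
      rw [h1, Real.sq_sqrt hpos]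
  · intro hneg
    ext p
    simp only [Set.mem_empty_iff_false, iff_false]
    intro hp
    have h := (key p).mp hp
    nlinarith [sq_nonneg ‖p - c‖, h.1]
end
end
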